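/- Let (Π_n)_{n∈ℕ} be a family of normal expanded natural deduction proofs in M⊃ such that each Π_n proves a formula α_n with height(Π_n) ≤ |α_n|, and suppose the family is super-polynomial: for every p ∈ ℕ with p > 0 there is n0 such that for all n > n0, |Π_n| > |α_n|^p. Then for every p ∈ ℕ with p > 3, for all but finitely many n there exist a sub-derivation Σ of Π_n and a level μ of Π_n such that at least |α_n|^{p-3} instances of Σ occur at level μ in Π_n. -/

import Mathlib

/-- Formulas of minimal implicational logic M⊃. -/
inductive MFormula : Type
  | var : ℕ → MFormula
  | imp : MFormula → MFormula → MFormula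
deriving DecidableEq

namespace MFormula

/-- Size of a formula: number of vertices of its syntax tree. -/
def size : MFormula → ℕ
  | .var _ => 1
  | .imp a b => a.size + b.size + 1

/-- Subformula relation. -/
inductive Subf : MFormula → MFormula → Prop
  | refl (t : MFormula) : Subf t t
  | impL {s a b : MFormula} : Subf s a → Subf s (imp a b)
  | impR {s a b : MFormula} : Subf s b → Subf s (imp a b)

/-- The finite set of subformulas of a formula. -/
def subformulas : MFormula → Finset MFormula
  | .var n => {.var n}
  | .imp a b => insert (imp a b) (a.subformulas ∪ b.subformulas)

end MFormula

/-- Natural deduction derivation trees for M⊃.  A leaf is an assumption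
occurrence, carrying its formula and `none` if it stays open, or `some n`
if it is discharged by the `n`-th ⊃-Intro application below it (de Bruijn
style, counting enclosing ⊃-Intro applications from the leaf downwards).
`elim a b` applies ⊃-Elim with minor premise `a` and major premise `b`;
`intro A t` applies ⊃-Intro discharging (the marked occurrences of) `A`. -/
inductive NDTree : Type
  | leaf : MFormula → Option ℕ → NDTree
  | elim : NDTree → NDTree → NDTree
  | intro : MFormula → NDTree → NDTree
deriving DecidableEq

namespace NDTree

/-- Conclusion of a derivation tree relative to the list of formulas
introduced by enclosing ⊃-Intro applications (innermost first);
`none` if the tree is not a well-formed derivation. -/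
def concl : NDTree → List MFormula → Option MFormula
  | .leaf A none, _ => some A
  | .leaf A (some n), ctx => if ctx[n]? = some A then some A else none
  | .elim a b, ctx =>
      match concl a ctx, concl b ctx with
      | some x, some (.imp p q) => if p = x then some q else none
      | _, _ => none
  | .intro A t, ctx => (concl t (A :: ctx)).map (fun B => MFormula.imp A B)

/-- Size of a derivation: its number of nodes. -/
def size : NDTree → ℕ
  | .leaf _ _ => 1
  | .elim a b => a.size + b.size + 1
  | .intro _ t => t.size + 1

/-- Height of a derivation: maximal number of edges on a root-to-leaf path. -/
def height : NDTree → ℕ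
  | .leaf _ _ => 0
  | .elim a b => max a.height b.height + 1
  | .intro _ t => t.height + 1

/-- Open assumptions of a subtree sitting below `d` of its own
⊃-Intro applications (at top level `d = 0`): leaves discharged by no
⊃-Intro of the subtree itself. -/
def openAssumAux : NDTree → ℕ → Finset MFormula
  | .leaf A none, _ => {A}
  | .leaf A (some n), d => if d ≤ n then {A} else ∅
  | .elim a b, d => openAssumAux a d ∪ openAssumAux b d
  | .intro _ t, d => openAssumAux t (d + 1)

/-- The set of open (undischarged) assumptions of a derivation. -/
def openAssum (t : NDTree) : Finset MFormula := openAssumAux t 0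

/-- A derivation is normal if no formula occurrence is simultaneously the
conclusion of a ⊃-Intro and the major premise of a ⊃-Elim. -/
def Normal : NDTree → Prop
  | .leaf _ _ => True
  | .elim a b => Normal a ∧ Normal b ∧ ∀ A u, b ≠ .intro A u
  | .intro _ t => Normal t

/-- `T` is a proof of `α`: a derivation with conclusion `α` and
no open assumptions. -/
def IsProofOf (t : NDTree) (α : MFormula) : Prop :=
  concl t [] = some α ∧ openAssum t = ∅

/-- A normal derivation (in context `ctx`) is expanded if every minimal
formula, i.e. every formula occurrence that is both the conclusion of a
⊃-Elim and the premise of a ⊃-Intro, is a propositional variable. -/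
def Expanded : NDTree → List MFormula → Prop
  | .leaf _ _, _ => True
  | .elim a b, ctx => Expanded a ctx ∧ Expanded b ctx
  | .intro A t, ctx => Expanded t (A :: ctx) ∧
      (∀ u v, t = .elim u v → ∃ i, concl t (A :: ctx) = some (.var i))

/-- `Subtree s t`: `s` is a sub-derivation (a node of `t` together with
everything above it) of `t`. -/
inductive Subtree : NDTree → NDTree → Prop
  | refl (t : NDTree) : Subtree t t
  | elimL {s a b : NDTree} : Subtree s a → Subtree s (.elim a b)
  | elimR {s a b : NDTree} : Subtree s b → Subtree s (.elim a b)
  | intro {s : NDTree} {A : MFormula} {t : NDTree} : Subtree s t → Subtree s (.intro A t)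

/-- Number of instances (sub-derivation occurrences identical to `s`
as labeled trees) of `s` in a derivation. -/
def countInst (s : NDTree) : NDTree → ℕ
  | .leaf A o => if NDTree.leaf A o = s then 1 else 0
  | .elim a b => (if NDTree.elim a b = s then 1 else 0) + countInst s a + countInst s b
  | .intro A t => (if NDTree.intro A t = s then 1 else 0) + countInst s t

/-- Number of instances of `s` occurring at level (distance from the root) `μ`. -/
def countInstAt (s : NDTree) : NDTree → ℕ → ℕ
  | t, 0 => if t = s then 1 else 0
  | .leaf _ _, _ + 1 => 0
  | .elim a b, n + 1 => countInstAt s a n + countInstAt s b n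
  | .intro _ t, n + 1 => countInstAt s t n

/-- `OccAt T ctx s ctx'` : `s` occurs in `T` (whose own context is `ctx`)
as a node-with-everything-above-it, with enclosing-intro context `ctx'`. -/
inductive OccAt : NDTree → List MFormula → NDTree → List MFormula → Prop
  | refl (t : NDTree) (ctx : List MFormula) : OccAt t ctx t ctx
  | elimL {T : NDTree} {ctx : List MFormula} {a b : NDTree} {ctx' : List MFormula} :
      OccAt T ctx (.elim a b) ctx' → OccAt T ctx a ctx'
  | elimR {T : NDTree} {ctx : List MFormula} {a b : NDTree} {ctx' : List MFormula} :
      OccAt T ctx (.elim a b) ctx' → OccAt T ctx b ctx'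
  | intro {T : NDTree} {ctx : List MFormula} {A : MFormula} {t : NDTree} {ctx' : List MFormula} :
      OccAt T ctx (.intro A t) ctx' → OccAt T ctx t (A :: ctx')

/-- Each node of a derivation lies on a unique branch; branches are in
bijection with their endpoints: the root of the derivation and the minor
premises of ⊃-Elim applications. -/
def IsBranchEndpoint (T s : NDTree) (ctx : List MFormula) : Prop :=
  (s = T ∧ ctx = []) ∨ ∃ u, OccAt T [] (NDTree.elim s u) ctx

/-- The (top-down) sequence of formulas of the branch ending at the root of
the given subtree: trace upwards through premises of ⊃-Intro and major
premises of ⊃-Elim up to a top-formula. -/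
def branchSeq : NDTree → List MFormula → Option (List MFormula)
  | .leaf A o, ctx => (concl (.leaf A o) ctx).map (fun c => [c])
  | .elim a b, ctx =>
      match branchSeq b ctx, concl (.elim a b) ctx with
      | some l, some c => some (l ++ [c])
      | _, _ => none
  | .intro A t, ctx =>
      match branchSeq t (A :: ctx), concl (.intro A t) ctx with
      | some l, some c => some (l ++ [c])
      | _, _ => none

/-- The (top-down) E-part of the branch ending at the root of the given
subtree: the top-formula and the successive conclusions of major-premise
⊃-Elim steps, ending at the minimal formula of the branch. -/
def epart : NDTree → List MFormula → Option (List MFormula)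
  | .leaf A o, ctx => (concl (.leaf A o) ctx).map (fun c => [c])
  | .elim a b, ctx =>
      match epart b ctx, concl (.elim a b) ctx with
      | some l, some c => some (l ++ [c])
      | _, _ => none
  | .intro A t, ctx => epart t (A :: ctx)

/-- Number of ⊃-Intro applications forming the I-part at the bottom of a
branch endpoint subtree. -/
def introCount : NDTree → ℕ
  | .intro _ t => introCount t + 1
  | _ => 0

/-- Count of branch endpoints strictly inside the given subtree (i.e. minor
premises of ⊃-Elim) whose branch has formula sequence `b`. -/
def brCount (b : List MFormula) : NDTree → List MFormula → ℕ
  | .leaf _ _, _ => 0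
  | .elim a c, ctx =>
      (if branchSeq a ctx = some b then 1 else 0) + brCount b a ctx + brCount b c ctx
  | .intro A t, ctx => brCount b t (A :: ctx)

/-- Total number of branches of `T` whose formula sequence is `b`. -/
def brTotal (b : List MFormula) (T : NDTree) : ℕ :=
  (if branchSeq T [] = some b then 1 else 0) + brCount b T []

/-- Count of branch endpoints strictly inside the given subtree (whose root
is at level `d` of the ambient derivation) whose branch has formula
sequence `b` and whose minimal formula occurs at level `μ`. -/
def brMinCount (b : List MFormula) (μ : ℕ) : NDTree → List MFormula → ℕ → ℕ
  | .leaf _ _, _, _ => 0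
  | .elim a c, ctx, d =>
      (if branchSeq a ctx = some b ∧ d + 1 + introCount a = μ then 1 else 0)
      + brMinCount b μ a ctx (d + 1) + brMinCount b μ c ctx (d + 1)
  | .intro A t, ctx, d => brMinCount b μ t (A :: ctx) (d + 1)

/-- Total number of branches of `T` with formula sequence `b` whose minimal
formula occurs at level `μ` of `T`. -/
def brMinTotal (b : List MFormula) (μ : ℕ) (T : NDTree) : ℕ :=
  (if branchSeq T [] = some b ∧ introCount T = μ then 1 else 0) + brMinCount b μ T [] 0

/-- No occurrence of `A` in the given subtree (sitting at intro-depth `d`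
below a fixed ⊃-Intro application) is an open assumption of the subtree
escaping that ⊃-Intro: every leaf labeled `A` is discharged by an
⊃-Intro at distance at most `d`. -/
def NoOpenBeyond (A : MFormula) : NDTree → ℕ → Prop
  | .leaf B o, d => B = A → ∃ n, o = some n ∧ n ≤ d
  | .elim a b, d => NoOpenBeyond A a d ∧ NoOpenBeyond A b d
  | .intro _ t, d => NoOpenBeyond A t (d + 1)

/-- Every ⊃-Intro application of the derivation is greedy: it discharges
all occurrences of its assumption that are open in the sub-derivation of
its premise. -/
def Greedy : NDTree → Prop
  | .leaf _ _ => True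
  | .elim a b => Greedy a ∧ Greedy b
  | .intro A t => NoOpenBeyond A t 0 ∧ Greedy t

/-- A matrix of `T`: a sub-derivation all of whose instances in `T` occur
at a single level. -/
def IsMatrix (s T : NDTree) : Prop :=
  Subtree s T ∧ ∃ μ, ∀ ν, 0 < countInstAt s T ν → ν = μ

end NDTree

/-- A Kripke model for M⊃: a preordered set of worlds with a monotone
valuation on propositional variables. -/
structure KModel where
  World : Type
  le : World → World → Prop
  le_refl : ∀ w, le w w
  le_trans : ∀ {a b c}, le a b → le b c → le a c
  val : World → ℕ → Prop
  mono : ∀ {w w'}, le w w' → ∀ p, val w p → val w' p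

/-- Kripke satisfaction for M⊃. -/
def KSat (M : KModel) : MFormula → M.World → Prop
  | .var p, w => M.val w p
  | .imp a b, w => ∀ w', M.le w w' → KSat M a w' → KSat M b w'

/-- Semantic entailment: every world of every Kripke model satisfying all
of `Δ` satisfies `β`. -/
def KEntails (Δ : Set MFormula) (β : MFormula) : Prop :=
  ∀ (M : KModel) (w : M.World), (∀ δ ∈ Δ, KSat M δ w) → KSat M β w

section FamilyRedundancyAux

open MFormula NDTree

lemma subf_trans {a b c : MFormula} (h1 : MFormula.Subf a b) (h2 : MFormula.Subf b c) :
    MFormula.Subf a c := by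
  induction h2 with
  | refl => exact h1
  | impL h ih => exact MFormula.Subf.impL ih
  | impR h ih => exact MFormula.Subf.impR ih

lemma subf_self_mem (t : MFormula) : t ∈ t.subformulas := by
  cases t <;> simp [MFormula.subformulas]

lemma subf_mem {s t : MFormula} (h : MFormula.Subf s t) : s ∈ t.subformulas := by
  induction h with
  | refl => exact subf_self_mem _
  | impL h ih => simp [MFormula.subformulas]; tauto
  | impR h ih => simp [MFormula.subformulas]; tauto

lemma card_subformulas_le (t : MFormula) : t.subformulas.card ≤ t.size := by
  induction t with
  | var n => simp [MFormula.subformulas, MFormula.size]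
  | imp a b iha ihb =>
    have h1 := Finset.card_insert_le (MFormula.imp a b) (a.subformulas ∪ b.subformulas)
    have h2 := Finset.card_union_le a.subformulas b.subformulas
    simp only [MFormula.subformulas, MFormula.size]
    omega

lemma mformula_size_pos (t : MFormula) : 1 ≤ t.size := by
  cases t <;> simp [MFormula.size]

lemma concl_elim_inv {a b : NDTree} {ctx : List MFormula} {c : MFormula}
    (h : NDTree.concl (.elim a b) ctx = some c) :
    ∃ x, NDTree.concl a ctx = some x ∧ NDTree.concl b ctx = some (.imp x c) := by
  rcases ha : NDTree.concl a ctx with _ | x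
  · simp only [NDTree.concl, ha] at h
    exact nomatch h
  · rcases hb : NDTree.concl b ctx with _ | y
    · simp only [NDTree.concl, ha, hb] at h
      exact nomatch h
    · cases y with
      | var i =>
        simp only [NDTree.concl, ha, hb] at h
        exact nomatch h
      | imp p q =>
        simp only [NDTree.concl, ha, hb] at h
        split at h
        · next hpx =>
          obtain rfl : q = c := by injection h
          exact ⟨x, rfl, by rw [hpx]⟩
        · exact nomatch h

lemma concl_intro_inv {A : MFormula} {t : NDTree} {ctx : List MFormula} {c : MFormula}
    (h : NDTree.concl (.intro A t) ctx = some c) :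
    ∃ B, NDTree.concl t (A :: ctx) = some B ∧ c = MFormula.imp A B := by
  simp only [NDTree.concl, Option.map_eq_some_iff] at h
  obtain ⟨B, hB, hc⟩ := h
  exact ⟨B, hB, hc.symm⟩

lemma concl_leaf_some_inv {A : MFormula} {n : ℕ} {ctx : List MFormula} {c : MFormula}
    (h : NDTree.concl (.leaf A (some n)) ctx = some c) :
    c = A ∧ ctx[n]? = some A := by
  simp only [NDTree.concl] at h
  split at h
  · exact ⟨(Option.some.injEq _ _ ▸ h).symm, by assumption⟩
  · exact absurd h (by simp)

lemma leaf_none_open {t : NDTree} {A : MFormula} (h : NDTree.Subtree (.leaf A none) t) :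
    ∀ d, A ∈ NDTree.openAssumAux t d := by
  induction h with
  | refl => intro d; simp [NDTree.openAssumAux]
  | elimL h ih => intro d; simp only [NDTree.openAssumAux, Finset.mem_union]; exact Or.inl (ih d)
  | elimR h ih => intro d; simp only [NDTree.openAssumAux, Finset.mem_union]; exact Or.inr (ih d)
  | intro h ih => intro d; exact ih (d + 1)

lemma oa_step : ∀ (t : NDTree) (ctx : List MFormula) (c : MFormula) (d : ℕ),
    NDTree.concl t ctx = some c → ∀ B ∈ NDTree.openAssumAux t d,
    B ∈ NDTree.openAssumAux t (d + 1) ∨ ctx[d]? = some B := by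
  intro t
  induction t with
  | leaf A o =>
    intro ctx c d h B hB
    cases o with
    | none => left; simpa [NDTree.openAssumAux] using hB
    | some n =>
      simp only [NDTree.openAssumAux] at hB
      split at hB
      · next hdn =>
        simp only [Finset.mem_singleton] at hB
        subst hB
        rcases Nat.lt_or_ge d n with hlt | hge
        · left; simp [NDTree.openAssumAux, Nat.succ_le_of_lt hlt]
        · have : n = d := le_antisymm hge hdn
          subst this
          right
          exact (concl_leaf_some_inv h).2
      · exact absurd hB (Finset.notMem_empty B)
  | elim a b iha ihb =>
    intro ctx c d h B hB
    obtain ⟨x, ha, hb⟩ := concl_elim_inv h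
    simp only [NDTree.openAssumAux, Finset.mem_union] at hB ⊢
    rcases hB with hB | hB
    · rcases iha ctx x d ha B hB with h' | h'
      · exact Or.inl (Or.inl h')
      · exact Or.inr h'
    · rcases ihb ctx _ d hb B hB with h' | h'
      · exact Or.inl (Or.inr h')
      · exact Or.inr h'
  | intro A t ih =>
    intro ctx c d h B hB
    obtain ⟨B0, ht, rfl⟩ := concl_intro_inv h
    have := ih (A :: ctx) B0 (d + 1) ht B hB
    simpa [NDTree.openAssumAux, List.getElem?_cons_succ] using this

lemma concl_subf_open : ∀ (t : NDTree) (ctx : List MFormula) (c : MFormula),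
    NDTree.Normal t → NDTree.concl t ctx = some c → (∀ A u, t ≠ .intro A u) →
    ∃ B ∈ NDTree.openAssumAux t 0, MFormula.Subf c B := by
  intro t
  induction t with
  | leaf A o =>
    intro ctx c _ h _
    have hcA : c = A := by
      cases o with
      | none =>
        simp only [NDTree.concl, Option.some.injEq] at h
        exact h.symm
      | some n => exact (concl_leaf_some_inv h).1
    subst hcA
    refine ⟨c, ?_, MFormula.Subf.refl c⟩
    cases o <;> simp [NDTree.openAssumAux]
  | elim a b iha ihb =>
    intro ctx c hn h _
    obtain ⟨x, ha, hb⟩ := concl_elim_inv h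
    obtain ⟨B, hBmem, hBsub⟩ := ihb ctx _ hn.2.1 hb hn.2.2
    refine ⟨B, ?_, subf_trans (MFormula.Subf.impR (MFormula.Subf.refl c)) hBsub⟩
    simp only [NDTree.openAssumAux, Finset.mem_union]
    exact Or.inr hBmem
  | intro A t ih =>
    intro ctx c _ _ hne
    exact absurd rfl (hne A t)

lemma leaf_subf : ∀ (t : NDTree) (ctx : List MFormula) (c A : MFormula) (o : Option ℕ),
    NDTree.Normal t → NDTree.concl t ctx = some c → NDTree.Subtree (.leaf A o) t →
    MFormula.Subf A c ∨ ∃ B ∈ NDTree.openAssumAux t 0, MFormula.Subf A B := by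
  intro t
  induction t with
  | leaf A' o' =>
    intro ctx c A o _ h hs
    obtain ⟨rfl, rfl⟩ : A = A' ∧ o = o' := by cases hs; exact ⟨rfl, rfl⟩
    have hcA : c = A := by
      cases o with
      | none =>
        simp only [NDTree.concl, Option.some.injEq] at h
        exact h.symm
      | some n => exact (concl_leaf_some_inv h).1
    subst hcA
    exact Or.inl (MFormula.Subf.refl _)
  | elim a b iha ihb =>
    intro ctx c A o hn h hs
    obtain ⟨x, ha, hb⟩ := concl_elim_inv h
    have hend := concl_subf_open b ctx _ hn.2.1 hb hn.2.2
    cases hs with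
    | elimL hs' =>
      rcases iha ctx x A o hn.1 ha hs' with hAx | ⟨B, hBm, hBs⟩
      · obtain ⟨B, hBm, hBs⟩ := hend
        refine Or.inr ⟨B, ?_, subf_trans (MFormula.Subf.impL hAx) hBs⟩
        simp only [NDTree.openAssumAux, Finset.mem_union]; exact Or.inr hBm
      · refine Or.inr ⟨B, ?_, hBs⟩
        simp only [NDTree.openAssumAux, Finset.mem_union]; exact Or.inl hBm
    | elimR hs' =>
      rcases ihb ctx _ A o hn.2.1 hb hs' with hAx | ⟨B, hBm, hBs⟩
      · obtain ⟨B, hBm, hBs⟩ := hend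
        refine Or.inr ⟨B, ?_, subf_trans hAx hBs⟩
        simp only [NDTree.openAssumAux, Finset.mem_union]; exact Or.inr hBm
      · refine Or.inr ⟨B, ?_, hBs⟩
        simp only [NDTree.openAssumAux, Finset.mem_union]; exact Or.inr hBm
  | intro A0 t ih =>
    intro ctx c A o hn h hs
    obtain ⟨B0, ht, rfl⟩ := concl_intro_inv h
    cases hs with
    | intro hs' =>
      rcases ih (A0 :: ctx) B0 A o hn ht hs' with hAx | ⟨B, hBm, hBs⟩
      · exact Or.inl (MFormula.Subf.impR hAx)
      · rcases oa_step t (A0 :: ctx) B0 0 ht B hBm with h' | h'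
        · exact Or.inr ⟨B, h', hBs⟩
        · simp only [List.getElem?_cons_zero, Option.some.injEq] at h'
          subst h'
          exact Or.inl (MFormula.Subf.impL hBs)

lemma idx_lt : ∀ (t : NDTree) (ctx : List MFormula) (c A : MFormula) (n : ℕ),
    NDTree.concl t ctx = some c → NDTree.Subtree (.leaf A (some n)) t →
    n < t.height + ctx.length := by
  intro t
  induction t with
  | leaf A' o' =>
    intro ctx c A n h hs
    obtain ⟨rfl, rfl⟩ : A = A' ∧ (some n : Option ℕ) = o' := by cases hs; exact ⟨rfl, rfl⟩
    have h2 := (concl_leaf_some_inv h).2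
    have hlt : n < ctx.length := by
      rcases Nat.lt_or_ge n ctx.length with h' | h'
      · exact h'
      · rw [List.getElem?_eq_none h'] at h2
        exact nomatch h2
    simpa [NDTree.height] using hlt
  | elim a b iha ihb =>
    intro ctx c A n h hs
    obtain ⟨x, ha, hb⟩ := concl_elim_inv h
    cases hs with
    | elimL hs' => have := iha ctx x A n ha hs'; simp only [NDTree.height]; omega
    | elimR hs' => have := ihb ctx _ A n hb hs'; simp only [NDTree.height]; omega
  | intro A0 t ih =>
    intro ctx c A n h hs
    obtain ⟨B0, ht, rfl⟩ := concl_intro_inv h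
    cases hs with
    | intro hs' =>
      have := ih (A0 :: ctx) B0 A n ht hs'
      simp only [NDTree.height, List.length_cons] at this ⊢
      omega

def leafCount : NDTree → ℕ
  | .leaf _ _ => 1
  | .elim a b => leafCount a + leafCount b
  | .intro _ t => leafCount t

lemma one_le_leafCount (t : NDTree) : 1 ≤ leafCount t := by
  induction t with
  | leaf A o => simp [leafCount]
  | elim a b iha ihb => simp only [leafCount]; omega
  | intro A t ih => simpa [leafCount] using ih

lemma size_le_leafCount (t : NDTree) :
    t.size ≤ (2 * t.height + 2) * leafCount t := by
  induction t with
  | leaf A o => simp [NDTree.size, NDTree.height, leafCount]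
  | elim a b iha ihb =>
    have hLa := one_le_leafCount a
    have hLb := one_le_leafCount b
    have h1 : (2 * a.height + 2) * leafCount a
        ≤ (2 * (max a.height b.height + 1) + 1) * leafCount a :=
      Nat.mul_le_mul_right _ (by omega)
    have h2 : (2 * b.height + 2) * leafCount b
        ≤ (2 * (max a.height b.height + 1) + 1) * leafCount b :=
      Nat.mul_le_mul_right _ (by omega)
    simp only [NDTree.size, NDTree.height, leafCount]
    have hsum : (2 * (max a.height b.height + 1) + 1) * leafCount a
        + (2 * (max a.height b.height + 1) + 1) * leafCount b + (leafCount a + leafCount b)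
        = (2 * (max a.height b.height + 1) + 2) * (leafCount a + leafCount b) := by ring
    omega
  | intro A t ih =>
    have hL := one_le_leafCount t
    simp only [NDTree.size, NDTree.height, leafCount]
    have h1 : (2 * t.height + 2) * leafCount t ≤ (2 * (t.height + 1) + 2) * leafCount t :=
      Nat.mul_le_mul_right _ (by omega)
    have h2 : 1 ≤ (2 * (t.height + 1) + 2) * leafCount t - (2 * t.height + 2) * leafCount t := by
      have : (2 * (t.height + 1) + 2) * leafCount t
          = (2 * t.height + 2) * leafCount t + 2 * leafCount t := by ring
      omega
    omega

lemma subtree_of_countInstAt_pos : ∀ (t : NDTree) (μ : ℕ) (s : NDTree),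
    0 < NDTree.countInstAt s t μ → NDTree.Subtree s t := by
  intro t
  induction t with
  | leaf A o =>
    intro μ s h
    cases μ with
    | zero =>
      simp only [NDTree.countInstAt] at h
      split at h
      · next heq => exact heq ▸ NDTree.Subtree.refl _
      · omega
    | succ ν => simp [NDTree.countInstAt] at h
  | elim a b iha ihb =>
    intro μ s h
    cases μ with
    | zero =>
      simp only [NDTree.countInstAt] at h
      split at h
      · next heq => exact heq ▸ NDTree.Subtree.refl _
      · omega
    | succ ν =>
      simp only [NDTree.countInstAt] at h
      rcases Nat.lt_or_ge 0 (NDTree.countInstAt s a ν) with h' | h'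
      · exact NDTree.Subtree.elimL (iha ν s h')
      · exact NDTree.Subtree.elimR (ihb ν s (by omega))
  | intro A t ih =>
    intro μ s h
    cases μ with
    | zero =>
      simp only [NDTree.countInstAt] at h
      split at h
      · next heq => exact heq ▸ NDTree.Subtree.refl _
      · omega
    | succ ν =>
      simp only [NDTree.countInstAt] at h
      exact NDTree.Subtree.intro (ih ν s h)

lemma leafCount_le_sum (S : Finset MFormula) (N : ℕ) :
    ∀ t : NDTree,
    (∀ A o, NDTree.Subtree (.leaf A o) t → A ∈ S ∧ ∃ m, o = some m ∧ m < N) →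
    leafCount t ≤ ∑ μ ∈ Finset.range (t.height + 1), ∑ A ∈ S, ∑ m ∈ Finset.range N,
      NDTree.countInstAt (.leaf A (some m)) t μ := by
  intro t
  induction t with
  | leaf A o =>
    intro h
    obtain ⟨hA, m, rfl, hm⟩ := h A o (NDTree.Subtree.refl _)
    simp only [leafCount, NDTree.height, zero_add, Finset.sum_range_one]
    have hinner : (1 : ℕ) ≤ ∑ m' ∈ Finset.range N,
        NDTree.countInstAt (.leaf A (some m')) (.leaf A (some m)) 0 := by
      have := Finset.single_le_sum
        (f := fun m' => NDTree.countInstAt (.leaf A (some m')) (.leaf A (some m)) 0)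
        (fun i _ => Nat.zero_le _) (Finset.mem_range.mpr hm)
      simpa [NDTree.countInstAt] using this
    calc (1 : ℕ) ≤ _ := hinner
      _ ≤ _ := Finset.single_le_sum
        (f := fun A' => ∑ m' ∈ Finset.range N,
          NDTree.countInstAt (.leaf A' (some m')) (.leaf A (some m)) 0)
        (fun i _ => Nat.zero_le _) hA
  | elim a b iha ihb =>
    intro h
    have ha := iha (fun A o hs => h A o (NDTree.Subtree.elimL hs))
    have hb := ihb (fun A o hs => h A o (NDTree.Subtree.elimR hs))
    simp only [leafCount, NDTree.height]
    have hsplit : ∑ μ ∈ Finset.range (max a.height b.height + 1 + 1), ∑ A ∈ S,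
        ∑ m ∈ Finset.range N, NDTree.countInstAt (.leaf A (some m)) (.elim a b) μ
        = (∑ μ ∈ Finset.range (max a.height b.height + 1), ∑ A ∈ S, ∑ m ∈ Finset.range N,
            NDTree.countInstAt (.leaf A (some m)) (.elim a b) (μ + 1))
          + ∑ A ∈ S, ∑ m ∈ Finset.range N,
            NDTree.countInstAt (.leaf A (some m)) (.elim a b) 0 :=
      Finset.sum_range_succ' _ _
    have hstep : ∀ μ, (∑ A ∈ S, ∑ m ∈ Finset.range N,
        NDTree.countInstAt (.leaf A (some m)) (.elim a b) (μ + 1))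
        = (∑ A ∈ S, ∑ m ∈ Finset.range N, NDTree.countInstAt (.leaf A (some m)) a μ)
          + ∑ A ∈ S, ∑ m ∈ Finset.range N, NDTree.countInstAt (.leaf A (some m)) b μ := by
      intro μ
      rw [← Finset.sum_add_distrib]
      refine Finset.sum_congr rfl fun A' _ => ?_
      rw [← Finset.sum_add_distrib]
      refine Finset.sum_congr rfl fun m' _ => rfl
    have hext : ∀ (u : NDTree), u.height + 1 ≤ max a.height b.height + 1 + 0 →
        (∑ μ ∈ Finset.range (u.height + 1), ∑ A ∈ S, ∑ m ∈ Finset.range N,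
          NDTree.countInstAt (.leaf A (some m)) u μ)
        ≤ ∑ μ ∈ Finset.range (max a.height b.height + 1), ∑ A ∈ S, ∑ m ∈ Finset.range N,
          NDTree.countInstAt (.leaf A (some m)) u μ := by
      intro u hu
      exact Finset.sum_le_sum_of_subset (Finset.range_subset_range.mpr (by omega))
    calc leafCount a + leafCount b
        ≤ (∑ μ ∈ Finset.range (max a.height b.height + 1), ∑ A ∈ S, ∑ m ∈ Finset.range N,
            NDTree.countInstAt (.leaf A (some m)) a μ)
          + ∑ μ ∈ Finset.range (max a.height b.height + 1), ∑ A ∈ S, ∑ m ∈ Finset.range N,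
            NDTree.countInstAt (.leaf A (some m)) b μ := by
          have h1 := hext a (by omega)
          have h2 := hext b (by omega)
          omega
      _ = ∑ μ ∈ Finset.range (max a.height b.height + 1), ∑ A ∈ S, ∑ m ∈ Finset.range N,
            NDTree.countInstAt (.leaf A (some m)) (.elim a b) (μ + 1) := by
          rw [← Finset.sum_add_distrib]
          exact (Finset.sum_congr rfl fun μ _ => (hstep μ).symm)
      _ ≤ _ := by rw [hsplit]; omega
  | intro A0 t ih =>
    intro h
    have ht := ih (fun A o hs => h A o (NDTree.Subtree.intro hs))
    simp only [leafCount, NDTree.height]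
    have hsplit : ∑ μ ∈ Finset.range (t.height + 1 + 1), ∑ A ∈ S,
        ∑ m ∈ Finset.range N, NDTree.countInstAt (.leaf A (some m)) (.intro A0 t) μ
        = (∑ μ ∈ Finset.range (t.height + 1), ∑ A ∈ S, ∑ m ∈ Finset.range N,
            NDTree.countInstAt (.leaf A (some m)) (.intro A0 t) (μ + 1))
          + ∑ A ∈ S, ∑ m ∈ Finset.range N,
            NDTree.countInstAt (.leaf A (some m)) (.intro A0 t) 0 :=
      Finset.sum_range_succ' _ _
    have hstep : ∀ μ, (∑ A ∈ S, ∑ m ∈ Finset.range N,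
        NDTree.countInstAt (.leaf A (some m)) (.intro A0 t) (μ + 1))
        = ∑ A ∈ S, ∑ m ∈ Finset.range N, NDTree.countInstAt (.leaf A (some m)) t μ := by
      intro μ
      refine Finset.sum_congr rfl fun A' _ => Finset.sum_congr rfl fun m' _ => rfl
    calc leafCount t ≤ _ := ht
      _ = ∑ μ ∈ Finset.range (t.height + 1), ∑ A ∈ S, ∑ m ∈ Finset.range N,
            NDTree.countInstAt (.leaf A (some m)) (.intro A0 t) (μ + 1) := by
          exact (Finset.sum_congr rfl fun μ _ => (hstep μ).symm)
      _ ≤ _ := by rw [hsplit]; omega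

end FamilyRedundancyAux

/-- every super-polynomial family of linearly height-bounded
normal expanded proofs is eventually redundant: for every p > 3, all but
finitely many members have a sub-derivation with at least |α_n|^(p-3)
instances at a common level. -/
theorem family_redundancy (T : ℕ → NDTree) (A : ℕ → MFormula)
    (hproof : ∀ n, (T n).IsProofOf (A n))
    (hnormal : ∀ n, (T n).Normal) (hexp : ∀ n, (T n).Expanded [])
    (hheight : ∀ n, (T n).height ≤ (A n).size)
    (hsuper : ∀ p : ℕ, 0 < p → ∃ n0, ∀ n > n0, (A n).size ^ p < (T n).size) :
    ∀ p : ℕ, 3 < p → ∃ N, ∀ n ≥ N,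
      ∃ (S : NDTree) (μ : ℕ),
        NDTree.Subtree S (T n) ∧ (A n).size ^ (p - 3) ≤ NDTree.countInstAt S (T n) μ := by
  intro p hp
  obtain ⟨n0, hn0⟩ := hsuper (p + 10) (by omega)
  refine ⟨n0 + 1, fun n hn => ?_⟩
  have hsz : (A n).size ^ (p + 10) < (T n).size := hn0 n (by omega)
  have ha1 : 1 ≤ (A n).size := mformula_size_pos (A n)
  by_cases hA1 : (A n).size = 1
  · refine ⟨T n, 0, NDTree.Subtree.refl _, ?_⟩
    simp [hA1, NDTree.countInstAt]
  · have ha2 : 2 ≤ (A n).size := by omega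
    obtain ⟨hconcl, hopen⟩ := hproof n
    have hopen' : NDTree.openAssumAux (T n) 0 = ∅ := hopen
    set a := (A n).size with hadef
    -- All leaves are good
    have hok : ∀ Af o, NDTree.Subtree (.leaf Af o) (T n) →
        Af ∈ (A n).subformulas ∧ ∃ m, o = some m ∧ m < a := by
      intro Af o hs
      constructor
      · rcases leaf_subf (T n) [] (A n) Af o (hnormal n) hconcl hs with h | ⟨B, hB, _⟩
        · exact subf_mem h
        · rw [hopen'] at hB; exact absurd hB (Finset.notMem_empty B)
      · cases o with
        | none =>
          exfalso
          have := leaf_none_open hs 0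
          rw [hopen'] at this
          exact absurd this (Finset.notMem_empty Af)
        | some m =>
          refine ⟨m, rfl, ?_⟩
          have h1 := idx_lt (T n) [] (A n) Af m hconcl hs
          have h2 := hheight n
          simp only [List.length_nil] at h1
          omega
    have hL1 : (T n).size ≤ (2 * (T n).height + 2) * leafCount (T n) := size_le_leafCount (T n)
    have hL2 := leafCount_le_sum (A n).subformulas a (T n) hok
    have hh : (T n).height ≤ a := hheight n
    -- leafCount is large
    have hbig : 128 * a ^ p < leafCount (T n) := by
      have e2 : (T n).size ≤ 4 * a * leafCount (T n) := by
        refine le_trans hL1 (Nat.mul_le_mul_right _ (by omega))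
      have e3 : 512 * a ^ (p + 1) ≤ a ^ (p + 10) := by
        have h9 : (512 : ℕ) ≤ a ^ 9 := by
          calc (512 : ℕ) = 2 ^ 9 := by norm_num
            _ ≤ a ^ 9 := Nat.pow_le_pow_left ha2 9
        calc 512 * a ^ (p + 1) ≤ a ^ 9 * a ^ (p + 1) := Nat.mul_le_mul_right _ h9
          _ = a ^ (p + 10) := by rw [← pow_add]; ring_nf
      have e4 : 4 * a * (128 * a ^ p) < 4 * a * leafCount (T n) := by
        calc 4 * a * (128 * a ^ p) = 512 * a ^ (p + 1) := by ring
          _ ≤ a ^ (p + 10) := e3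
          _ < (T n).size := hsz
          _ ≤ 4 * a * leafCount (T n) := e2
      exact Nat.lt_of_mul_lt_mul_left e4
    -- constant bound per class
    set B := a ^ (p - 3) with hBdef
    have hcard : (A n).subformulas.card ≤ a := card_subformulas_le (A n)
    have hconst : ((T n).height + 1) * ((A n).subformulas.card * (a * B)) ≤ 128 * a ^ p := by
      have hx : ((T n).height + 1) * ((A n).subformulas.card * (a * B))
          ≤ (2 * a) * (a * (a * B)) := by
        have h1 : (T n).height + 1 ≤ 2 * a := by omega
        exact Nat.mul_le_mul h1 (Nat.mul_le_mul hcard (le_refl _))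
      have hy : (2 * a) * (a * (a * B)) = 2 * (a ^ 3 * B) := by ring
      have hz : a ^ 3 * B = a ^ p := by
        rw [hBdef, ← pow_add]
        congr 1
        omega
      calc ((T n).height + 1) * ((A n).subformulas.card * (a * B))
          ≤ (2 * a) * (a * (a * B)) := hx
        _ = 2 * a ^ p := by rw [hy, hz]
        _ ≤ 128 * a ^ p := by omega
    -- pigeonhole
    have hlt1 : ∑ μ ∈ Finset.range ((T n).height + 1),
        ((A n).subformulas.card * (a * B))
        < ∑ μ ∈ Finset.range ((T n).height + 1), ∑ Af ∈ (A n).subformulas,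
          ∑ m ∈ Finset.range a, NDTree.countInstAt (.leaf Af (some m)) (T n) μ := by
      rw [Finset.sum_const, Finset.card_range, smul_eq_mul]
      omega
    obtain ⟨μ, _, hμ⟩ := Finset.exists_lt_of_sum_lt hlt1
    have hlt2 : ∑ Af ∈ (A n).subformulas, (a * B)
        < ∑ Af ∈ (A n).subformulas, ∑ m ∈ Finset.range a,
          NDTree.countInstAt (.leaf Af (some m)) (T n) μ := by
      rw [Finset.sum_const, smul_eq_mul]
      calc (A n).subformulas.card * (a * B) ≤ (A n).subformulas.card * (a * B) := le_refl _
        _ < _ := hμ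
    obtain ⟨Af, _, hAf⟩ := Finset.exists_lt_of_sum_lt hlt2
    have hlt3 : ∑ m ∈ Finset.range a, B
        < ∑ m ∈ Finset.range a, NDTree.countInstAt (.leaf Af (some m)) (T n) μ := by
      rw [Finset.sum_const, Finset.card_range, smul_eq_mul]
      exact hAf
    obtain ⟨m, _, hm⟩ := Finset.exists_lt_of_sum_lt hlt3
    refine ⟨.leaf Af (some m), μ, ?_, le_of_lt hm⟩
    exact subtree_of_countInstAt_pos (T n) μ _ (lt_of_le_of_lt (Nat.zero_le B) hm)
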